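/- If K is a triangulated n-sphere admitting a simplicial map of degree 3 to S^n_{n+2}, then K has at least n + 6 vertices. -/

import Mathlib

open Finset

/-- An abstract simplicial complex on vertex type `V`: a collection of nonempty
finite sets of vertices closed under taking nonempty subsets. -/
structure AbsCx (V : Type*) where
  faces : Set (Finset V)
  down_closed : ∀ ⦃s t : Finset V⦄, s ∈ faces → t ⊆ s → t.Nonempty → t ∈ faces
  nonempty_of_mem : ∀ ⦃s⦄, s ∈ faces → s.Nonempty

namespace AbsCx

variable {V W : Type*}

/-- The vertices of a complex. -/
def vertexSet (K : AbsCx V) : Set V := {v | {v} ∈ K.faces}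

/-- The `n`-dimensional faces (given by `n+1` vertices). -/
def facetsOfDim (K : AbsCx V) (n : ℕ) : Set (Finset V) :=
  {s | s ∈ K.faces ∧ s.card = n + 1}

/-- A simplicial map sends faces to faces. -/
def IsSimplicialMap [DecidableEq W] (K : AbsCx V) (L : AbsCx W) (f : V → W) : Prop :=
  ∀ s ∈ K.faces, s.image f ∈ L.faces

/-- Geometric realization of an abstract simplicial complex, as a subspace of `V → ℝ`. -/
def realization (K : AbsCx V) : Set (V → ℝ) :=
  {g | (∀ v, 0 ≤ g v) ∧ ∃ s ∈ K.faces, (∀ v, v ∉ s → g v = 0) ∧ ∑ v ∈ s, g v = 1}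

/-- `K` is a triangulation of the `n`-sphere. -/
def IsSphereTriangulation (n : ℕ) (K : AbsCx V) : Prop :=
  Nonempty (K.realization ≃ₜ Metric.sphere (0 : EuclideanSpace ℝ (Fin (n+1))) 1)

/-- `K` is a triangulation of the closed `n`-disc. -/
def IsDiscTriangulation (n : ℕ) (K : AbsCx V) : Prop :=
  Nonempty (K.realization ≃ₜ Metric.closedBall (0 : EuclideanSpace ℝ (Fin n)) 1)

/-- `K` triangulates a closed (compact, boundaryless = locally Euclidean) topological
`n`-manifold. -/
def IsClosedManifoldTriangulation (n : ℕ) (K : AbsCx V) : Prop :=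
  ∃ (M : Type) (ts : TopologicalSpace M),
    @CompactSpace M ts ∧ Nonempty (@ChartedSpace (EuclideanSpace ℝ (Fin n)) _ M ts) ∧
      Nonempty (@Homeomorph (K.realization) M _ ts)

/-- A coherent orientation of the `n`-dimensional faces of `K`: a sign function on
ordered `(n+1)`-tuples of vertices, alternating under permutations, equal to `±1`
exactly on the orderings of `n`-faces, and such that two facets sharing an
`(n-1)`-face (i.e. orderings differing in exactly one coordinate) get opposite signs. -/
structure CoherentOrientation [DecidableEq V] (n : ℕ) (K : AbsCx V) where
  sign : (Fin (n+1) → V) → ℤ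
  sign_perm : ∀ (x : Fin (n+1) → V) (σ : Equiv.Perm (Fin (n+1))),
    sign (x ∘ σ) = (Equiv.Perm.sign σ : ℤ) * sign x
  sign_unit : ∀ x : Fin (n+1) → V, Function.Injective x →
    Finset.image x Finset.univ ∈ K.faces → sign x = 1 ∨ sign x = -1
  sign_zero : ∀ x : Fin (n+1) → V,
    ¬ Function.Injective x ∨ Finset.image x Finset.univ ∉ K.faces → sign x = 0
  coherent : ∀ x y : Fin (n+1) → V,
    (∃ i, x i ≠ y i ∧ ∀ j, j ≠ i → x j = y j) →
    sign x ≠ 0 → sign y ≠ 0 → sign y = - sign x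

open scoped Classical in
/-- The algebraic number of preimages of the ordered simplex `y` under `f`. -/
noncomputable def algSum [Fintype V] {n : ℕ}
    (sgn : (Fin (n+1) → V) → ℤ) (f : V → W) (y : Fin (n+1) → W) : ℤ :=
  ∑ x : Fin (n+1) → V, if f ∘ x = y then sgn x else 0

/-- `f` has degree `d`: the algebraic number of preimages of every positively
oriented facet of the target equals `d`. -/
def HasDegree [Fintype V] [DecidableEq V] [DecidableEq W] {n : ℕ}
    {K : AbsCx V} {L : AbsCx W}
    (oK : CoherentOrientation n K) (oL : CoherentOrientation n L)
    (f : V → W) (d : ℤ) : Prop :=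
  ∀ y : Fin (n+1) → W, oL.sign y = 1 → algSum oK.sign f y = d

/-- The standard `n`-sphere `S^n_{n+2}`: the boundary complex of the `(n+1)`-simplex,
i.e. all proper nonempty subsets of `n+2` vertices. -/
def stdSphere (n : ℕ) : AbsCx (Fin (n+2)) where
  faces := {s | s.Nonempty ∧ s ≠ Finset.univ}
  down_closed := fun {s t} hs hts ht =>
    ⟨ht, fun h => hs.2 (Finset.univ_subset_iff.mp (h ▸ hts))⟩
  nonempty_of_mem := fun {s} hs => hs.1

/-- Boundary edges of a 2-dimensional complex: edges lying in exactly one triangle. -/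
def boundaryEdges (K : AbsCx V) : Set (Finset V) :=
  {e | e ∈ K.faces ∧ e.card = 2 ∧ Set.ncard {s | s ∈ K.faces ∧ s.card = 3 ∧ e ⊆ s} = 1}

end AbsCx

open AbsCx


section Aux

open scoped Classical in
/-- Number of vertices of `K` in the fiber of `f` over `w`. -/
noncomputable def fibCard {V : Type*} [Fintype V] {W : Type*} (K : AbsCx V)
    (f : V → W) (w : W) : ℕ :=
  (Finset.univ.filter (fun u => u ∈ K.vertexSet ∧ f u = w)).card

lemma sign_trichotomy {V : Type*} [DecidableEq V] {n : ℕ} {K : AbsCx V}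
    (oK : CoherentOrientation n K) (x : Fin (n+1) → V) :
    oK.sign x = 1 ∨ oK.sign x = 0 ∨ oK.sign x = -1 := by
  classical
  by_cases h : Function.Injective x ∧ Finset.image x Finset.univ ∈ K.faces
  · rcases oK.sign_unit x h.1 h.2 with h' | h'
    · exact Or.inl h'
    · exact Or.inr (Or.inr h')
  · exact Or.inr (Or.inl (oK.sign_zero x (not_and_or.mp h)))

lemma sign_ne_zero_props {V : Type*} [DecidableEq V] {n : ℕ} {K : AbsCx V}
    (oK : CoherentOrientation n K) {x : Fin (n+1) → V} (hx : oK.sign x ≠ 0) :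
    Function.Injective x ∧ Finset.image x Finset.univ ∈ K.faces := by
  by_contra h
  exact hx (oK.sign_zero x (not_and_or.mp h))

lemma mem_vertexSet_of_sign {V : Type*} [DecidableEq V] {n : ℕ} {K : AbsCx V}
    (oK : CoherentOrientation n K) {x : Fin (n+1) → V} (hx : oK.sign x ≠ 0)
    (j : Fin (n+1)) : x j ∈ K.vertexSet := by
  obtain ⟨hinj, hmem⟩ := sign_ne_zero_props oK hx
  have : ({x j} : Finset V) ∈ K.faces :=
    K.down_closed hmem
      (Finset.singleton_subset_iff.mpr (Finset.mem_image_of_mem x (Finset.mem_univ j)))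
      (Finset.singleton_nonempty _)
  exact this

/-- Two positively oriented tuples that agree off one coordinate are equal. -/
lemma eq_of_pos_agree {V : Type*} [DecidableEq V] {n : ℕ} {K : AbsCx V}
    (oK : CoherentOrientation n K) {x x' : Fin (n+1) → V}
    (h1 : oK.sign x = 1) (h2 : oK.sign x' = 1) (j0 : Fin (n+1))
    (hagree : ∀ j, j ≠ j0 → x j = x' j) : x = x' := by
  by_contra hne
  have hd : x j0 ≠ x' j0 := by
    intro h
    apply hne
    funext j
    by_cases hj : j = j0
    · rw [hj, h]
    · exact hagree j hj
  have hco := oK.coherent x x' ⟨j0, hd, hagree⟩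
    (by rw [h1]; norm_num) (by rw [h2]; norm_num)
  rw [h1, h2] at hco
  norm_num at hco

/-- Key counting lemma: if the algebraic preimage count of `y` is `3`, then for every
coordinate `j0`, the product of fiber sizes over the other coordinates is at least `3`. -/
lemma keyA {V : Type*} [Fintype V] [DecidableEq V] {n : ℕ} {K : AbsCx V}
    (oK : CoherentOrientation n K) (f : V → Fin (n+2)) (y : Fin (n+1) → Fin (n+2))
    (hd : algSum oK.sign f y = 3) (j0 : Fin (n+1)) :
    3 ≤ ∏ j, (if j = j0 then 1 else fibCard K f (y j)) := by
  classical
  set P : Finset (Fin (n+1) → V) :=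
    Finset.univ.filter (fun x => f ∘ x = y ∧ oK.sign x = 1) with hP
  have hcard : 3 ≤ P.card := by
    have h1 : algSum oK.sign f y ≤ (P.card : ℤ) := by
      rw [algSum, hP]
      rw [← Finset.sum_boole]
      apply Finset.sum_le_sum
      intro x _
      by_cases hfx : f ∘ x = y
      · rcases sign_trichotomy oK x with h | h | h <;> simp [hfx, h]
      · simp [hfx]
    rw [hd] at h1
    exact_mod_cast h1
  obtain ⟨x1, hx1, x2, hx2, x3, hx3, h12, h13, h23⟩ :=
    Finset.two_lt_card.mp (by omega : 2 < P.card)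
  rw [hP, Finset.mem_filter] at hx1 hx2 hx3
  obtain ⟨-, hf1, hs1⟩ := hx1
  obtain ⟨-, hf2, hs2⟩ := hx2
  obtain ⟨-, hf3, hs3⟩ := hx3
  set r : (Fin (n+1) → V) → (Fin (n+1) → V) :=
    fun x j => if j = j0 then x1 j0 else x j with hr
  have key : ∀ a b : Fin (n+1) → V, oK.sign a = 1 → oK.sign b = 1 → a ≠ b →
      r a ≠ r b := by
    intro a b ha hb hab he
    apply hab
    apply eq_of_pos_agree oK ha hb j0
    intro j hj
    have := congrFun he j
    simpa [hr, hj] using this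
  set B : Fin (n+1) → Finset V := fun j =>
    if j = j0 then {x1 j0} else Finset.univ.filter (fun u => u ∈ K.vertexSet ∧ f u = y j)
    with hB
  have hmem : ∀ a : Fin (n+1) → V, f ∘ a = y → oK.sign a = 1 →
      r a ∈ Fintype.piFinset B := by
    intro a hfa hsa
    rw [Fintype.mem_piFinset]
    intro j
    by_cases hj : j = j0
    · simp [hB, hr, hj]
    · simp only [hB, hr, if_neg hj, Finset.mem_filter]
      exact ⟨Finset.mem_univ _,
        mem_vertexSet_of_sign oK (by rw [hsa]; norm_num) j, congrFun hfa j⟩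
  have hsub : ({r x1, r x2, r x3} : Finset (Fin (n+1) → V)) ⊆ Fintype.piFinset B := by
    intro z hz
    simp only [Finset.mem_insert, Finset.mem_singleton] at hz
    rcases hz with rfl | rfl | rfl
    · exact hmem x1 hf1 hs1
    · exact hmem x2 hf2 hs2
    · exact hmem x3 hf3 hs3
  have hc3 : ({r x1, r x2, r x3} : Finset (Fin (n+1) → V)).card = 3 := by
    rw [Finset.card_insert_of_notMem, Finset.card_insert_of_notMem,
      Finset.card_singleton]
    · simp only [Finset.mem_singleton]
      exact key x2 x3 hs2 hs3 h23
    · simp only [Finset.mem_insert, Finset.mem_singleton]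
      push_neg
      exact ⟨key x1 x2 hs1 hs2 h12, key x1 x3 hs1 hs3 h13⟩
  have hle := Finset.card_le_card hsub
  rw [hc3, Fintype.card_piFinset] at hle
  calc (3 : ℕ) ≤ ∏ j, (B j).card := hle
    _ = ∏ j, (if j = j0 then 1 else fibCard K f (y j)) := by
        apply Finset.prod_congr rfl
        intro j _
        by_cases hj : j = j0
        · simp [hB, hj]
        · simp only [hB, if_neg hj, fibCard]
          congr!

lemma sum_ge_of_prod {ι : Type*} (s : Finset ι) (g : ι → ℕ)
    (h1 : ∀ i ∈ s, 1 ≤ g i) (h3 : 3 ≤ ∏ i ∈ s, g i) :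
    s.card + 2 ≤ ∑ i ∈ s, g i := by
  have hle : ∏ i ∈ s, g i ≤ 2 ^ (∑ i ∈ s, (g i - 1)) := by
    rw [← Finset.prod_pow_eq_pow_sum]
    apply Finset.prod_le_prod'
    intro i hi
    have h2 := Nat.lt_two_pow_self (n := g i - 1)
    have := h1 i hi
    omega
  have he : 2 ≤ ∑ i ∈ s, (g i - 1) := by
    by_contra h
    push_neg at h
    have : (2:ℕ) ^ (∑ i ∈ s, (g i - 1)) ≤ 2 ^ 1 :=
      Nat.pow_le_pow_right (by norm_num) (by omega)
    omega
  have hsum : ∑ i ∈ s, g i = (∑ i ∈ s, (g i - 1)) + s.card := by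
    rw [Finset.card_eq_sum_ones, ← Finset.sum_add_distrib]
    apply Finset.sum_congr rfl
    intro i hi
    have := h1 i hi
    omega
  omega

lemma exists_pos0 (oL : CoherentOrientation 0 (stdSphere 0)) :
    ∃ y : Fin 1 → Fin 2, oL.sign y = 1 := by
  have hsub : ∀ a b : Fin (0+1), a = b := fun a b => by
    have := a.isLt; have := b.isLt; exact Fin.ext (by omega)
  have hinj : ∀ c : Fin 2, Function.Injective (fun _ : Fin 1 => c) :=
    fun c a b _ => hsub a b
  have hface : ∀ c : Fin 2,
      Finset.image (fun _ : Fin 1 => c) Finset.univ ∈ (stdSphere 0).faces := by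
    intro c
    have himg : Finset.image (fun _ : Fin 1 => c) Finset.univ = {c} := by simp
    rw [himg]
    refine ⟨Finset.singleton_nonempty c, ?_⟩
    intro h
    have := congrArg Finset.card h
    simp at this
  rcases oL.sign_unit (fun _ => 0) (hinj 0) (hface 0) with h0 | h0
  · exact ⟨fun _ => 0, h0⟩
  · rcases oL.sign_unit (fun _ => 1) (hinj 1) (hface 1) with h1 | h1
    · exact ⟨fun _ => 1, h1⟩
    · have hco := oL.coherent (fun _ => 0) (fun _ => 1)
        ⟨0, by simp, fun j hj => absurd (hsub j 0) hj⟩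
        (by rw [h0]; norm_num) (by rw [h1]; norm_num)
      rw [h0, h1] at hco
      norm_num at hco

lemma exists_pos_succ {n : ℕ} (oL : CoherentOrientation (n+1) (stdSphere (n+1)))
    (w : Fin (n+3)) :
    ∃ y : Fin (n+2) → Fin (n+3),
      Function.Injective y ∧ (∀ j, y j ≠ w) ∧ oL.sign y = 1 := by
  have hcard : (Finset.univ.erase w).card = n + 2 := by
    rw [Finset.card_erase_of_mem (Finset.mem_univ w), Finset.card_univ]
    simp
  set e := (Finset.univ.erase w).orderEmbOfFin hcard with he
  have hmem : ∀ j, e j ∈ Finset.univ.erase w :=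
    fun j => Finset.orderEmbOfFin_mem _ hcard j
  have hinj : Function.Injective (e : Fin (n+2) → Fin (n+3)) := e.injective
  have hnotw : ∀ j, (e : Fin (n+2) → Fin (n+3)) j ≠ w :=
    fun j => (Finset.mem_erase.mp (hmem j)).1
  have hface : ∀ g : Fin (n+2) → Fin (n+3), Function.Injective g →
      Finset.image g Finset.univ ∈ (stdSphere (n+1)).faces := by
    intro g hg
    refine ⟨⟨g 0, Finset.mem_image_of_mem g (Finset.mem_univ 0)⟩, ?_⟩
    intro h
    have h2 := congrArg Finset.card h
    rw [Finset.card_image_of_injective _ hg] at h2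
    simp [Finset.card_univ] at h2
  have h01 : (0 : Fin (n+2)) ≠ 1 := by
    intro h
    have := congrArg Fin.val h
    simp [Fin.val_one] at this
  rcases oL.sign_unit e hinj (hface e hinj) with h1 | h1
  · exact ⟨e, hinj, hnotw, h1⟩
  · refine ⟨(e : Fin (n+2) → Fin (n+3)) ∘ (Equiv.swap 0 1),
      hinj.comp (Equiv.injective _), fun j => hnotw _, ?_⟩
    rw [oL.sign_perm (e : Fin (n+2) → Fin (n+3)) (Equiv.swap 0 1),
      Equiv.Perm.sign_swap h01, h1]
    norm_num

lemma sum_fibCard {V : Type*} [Fintype V] {W : Type*} [Fintype W] [DecidableEq W]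
    (K : AbsCx V) (f : V → W) :
    ∑ v : W, fibCard K f v = K.vertexSet.ncard := by
  classical
  have h1 : K.vertexSet.ncard = (Finset.univ.filter (fun u => u ∈ K.vertexSet)).card := by
    rw [AbsCx.vertexSet, Set.ncard_eq_toFinset_card', Set.toFinset_setOf]
    congr 1
  rw [h1, Finset.card_eq_sum_card_fiberwise (f := f) (t := Finset.univ)
    (fun x _ => Finset.mem_univ (f x))]
  apply Finset.sum_congr rfl
  intro v _
  rw [fibCard, Finset.filter_filter]
  congr!

end Aux

/-- A triangulated `n`-sphere admitting a simplicial degree `3` map to `S^n_{n+2}`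
has at least `n + 6` vertices. -/
theorem stmt13 {V : Type*} [Fintype V] [DecidableEq V] (n : ℕ) (K : AbsCx V)
    (hK : K.IsSphereTriangulation n)
    (oK : CoherentOrientation n K) (oL : CoherentOrientation n (stdSphere n))
    (f : V → Fin (n + 2)) (hf : K.IsSimplicialMap (stdSphere n) f)
    (hdeg : HasDegree oK oL f 3) :
    n + 6 ≤ K.vertexSet.ncard := by
  classical
  rw [← sum_fibCard K f]
  cases n with
  | zero =>
    obtain ⟨y, hy⟩ := exists_pos0 oL
    have h := keyA oK f y (hdeg y hy) 0
    have hprod : ∏ j : Fin 1, (if j = 0 then 1 else fibCard K f (y j)) = 1 := by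
      simp
    rw [hprod] at h
    omega
  | succ k =>
    -- choose the vertex with the largest fiber
    obtain ⟨w, -, hw⟩ := Finset.exists_max_image Finset.univ
      (fibCard K f) Finset.univ_nonempty
    obtain ⟨y, hyinj, hynotw, hysign⟩ := exists_pos_succ oL w
    -- choose the coordinate with the largest fiber
    obtain ⟨jm, -, hjm⟩ := Finset.exists_max_image (Finset.univ : Finset (Fin (k+2)))
      (fun j => fibCard K f (y j)) Finset.univ_nonempty
    have hprod : 3 ≤ ∏ j, (if j = jm then 1 else fibCard K f (y j)) :=
      keyA oK f y (hdeg y hysign) jm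
    -- every factor is at least 1
    have h1each : ∀ j ∈ (Finset.univ : Finset (Fin (k+2))),
        1 ≤ (if j = jm then 1 else fibCard K f (y j)) := by
      intro j _
      by_contra h
      have h0 : (if j = jm then 1 else fibCard K f (y j)) = 0 := by omega
      have hz : ∏ j, (if j = jm then 1 else fibCard K f (y j)) = 0 :=
        Finset.prod_eq_zero (Finset.mem_univ j) h0
      omega
    have hsumM : (Finset.univ : Finset (Fin (k+2))).card + 2
        ≤ ∑ j, (if j = jm then 1 else fibCard K f (y j)) :=
      sum_ge_of_prod _ _ h1each hprod
    rw [Finset.card_univ, Fintype.card_fin] at hsumM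
    -- split off the jm term
    have hsplitM : ∑ j, (if j = jm then 1 else fibCard K f (y j))
        = 1 + ∑ j ∈ Finset.univ.erase jm, fibCard K f (y j) := by
      rw [← Finset.add_sum_erase _ _ (Finset.mem_univ jm)]
      congr 1
      · simp
      · apply Finset.sum_congr rfl
        intro j hj
        simp [Finset.ne_of_mem_erase hj]
    have hSE : k + 3 ≤ ∑ j ∈ Finset.univ.erase jm, fibCard K f (y j) := by omega
    -- the largest coordinate fiber has size at least 2
    have hjm2 : 2 ≤ fibCard K f (y jm) := by
      by_contra h
      push_neg at h
      have hall : ∀ j, j ≠ jm → fibCard K f (y j) ≤ 1 := by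
        intro j hj
        by_contra h2
        push_neg at h2
        have := hjm j (Finset.mem_univ j)
        omega
      have hle1 : ∏ j, (if j = jm then 1 else fibCard K f (y j)) ≤ 1 := by
        calc ∏ j, (if j = jm then 1 else fibCard K f (y j))
            ≤ ∏ _j : Fin (k+2), 1 := by
              apply Finset.prod_le_prod'
              intro j _
              by_cases hj : j = jm
              · simp [hj]
              · simp only [if_neg hj]
                exact hall j hj
          _ = 1 := by simp
      omega
    have hw2 : 2 ≤ fibCard K f w := le_trans hjm2 (hw (y jm) (Finset.mem_univ _))
    -- the image of y is exactly the complement of w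
    have himg : Finset.image y Finset.univ = Finset.univ.erase w := by
      apply Finset.eq_of_subset_of_card_le
      · intro v hv
        obtain ⟨j, -, rfl⟩ := Finset.mem_image.mp hv
        exact Finset.mem_erase.mpr ⟨hynotw j, Finset.mem_univ _⟩
      · rw [Finset.card_erase_of_mem (Finset.mem_univ w),
          Finset.card_image_of_injective _ hyinj]
        simp
    -- put everything together
    have hsplit : ∑ v, fibCard K f v
        = fibCard K f w + ∑ v ∈ Finset.univ.erase w, fibCard K f v :=
      (Finset.add_sum_erase _ (fibCard K f) (Finset.mem_univ w)).symm
    have hsum_img : ∑ v ∈ Finset.univ.erase w, fibCard K f v = ∑ j, fibCard K f (y j) := by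
      rw [← himg, Finset.sum_image (fun a _ b _ h => hyinj h)]
    have hsplity : ∑ j, fibCard K f (y j)
        = fibCard K f (y jm) + ∑ j ∈ Finset.univ.erase jm, fibCard K f (y j) :=
      (Finset.add_sum_erase _ (fun j => fibCard K f (y j)) (Finset.mem_univ jm)).symm
    omega
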